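/- In the Solomon simultaneous-report mechanism with proposer b (the non-mother) in state α, the responder a's unique optimal first-stage report is α, provided a's utility satisfies u_a(C) - F > u_a(B), i.e., a prefers outcome C with the fine to outcome B without it. -/
import Mathlib


inductive SolOutcome | A | B | C
deriving DecidableEq

inductive SolMsg | α | β
deriving DecidableEq

open SolOutcome SolMsg

/-- The allocation implemented by an agreed-upon report: A if α, B if β. -/
def outcomeOf : SolMsg → SolOutcome
  | SolMsg.α => SolOutcome.A
  | SolMsg.β => SolOutcome.B

/-- state α, proposer is `b` (the non-mother), responder is `a` (the true
mother).  If reports agree the agreed outcome is implemented with no fines; if they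
disagree both pay `F` and `b` sends a challenge message (chosen as a best response for
`b`): matching `a`'s report implements it and refunds `a`'s fine, mismatching gives `C`
with `a`'s fine kept.  Provided `uA C - F > uA B`, the responder `a`'s unique optimal
first-stage report is α, whatever `b`'s first-stage report is. -/
theorem solomon_responder_reports_truth
    (uA uB : SolOutcome → ℝ) (F : ℝ) (hF : 0 < F)
    (hAC : uA C < uA A) (hCB : uA B < uA C)
    (hbB : uB A < uB B) (hbAC : uB A = uB C)
    (hCFB : uA B < uA C - F)
    -- b's challenge strategy: the message b sends after observing a's report `r`
    (bChal : SolMsg → SolMsg)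
    -- b's challenge message is a best response for b in every challenge subgame:
    -- matching r implements outcomeOf r, mismatching implements C; b keeps the fine F.
    (hbBR : ∀ r m : SolMsg,
      (if m = r then uB (outcomeOf r) - F else uB C - F) ≤
        (if bChal r = r then uB (outcomeOf r) - F else uB C - F))
    -- a's payoff as responder, as a function of b's first-stage report Mp and a's report Mr
    (payA : SolMsg → SolMsg → ℝ)
    (hpayA : ∀ Mp Mr : SolMsg,
      payA Mp Mr =
        if Mr = Mp then uA (outcomeOf Mr)
        else if bChal Mr = Mr then uA (outcomeOf Mr) else uA C - F) :
    ∀ Mp : SolMsg, (∀ Mr : SolMsg, Mr ≠ SolMsg.α → payA Mp Mr < payA Mp SolMsg.α) ∧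
      (∀ Mr : SolMsg, payA Mp Mr ≤ payA Mp SolMsg.α) := by
  have hcb : bChal SolMsg.β = SolMsg.β := by
    have h := hbBR SolMsg.β SolMsg.β
    by_contra hne
    simp [hne, hbAC, outcomeOf] at h
    linarith
  intro Mp
  have key : ∀ Mr : SolMsg, Mr ≠ SolMsg.α → payA Mp Mr < payA Mp SolMsg.α := by
    intro Mr hMr
    have hβ : Mr = SolMsg.β := by cases Mr <;> simp_all
    subst hβ
    rw [hpayA, hpayA]
    cases Mp <;> by_cases hc : bChal SolMsg.α = SolMsg.α <;>
      simp [hcb, hc, outcomeOf] <;> linarith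
  refine ⟨key, fun Mr => ?_⟩
  by_cases h : Mr = SolMsg.α
  · subst h; exact le_refl _
  · exact (key Mr h).le
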